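/- Let π : E → M be a vector bundle and Y, Y' projectable vector fields on E. Then the fibre derivative commutes with the Lie bracket: [FY, FY'] = F[Y, Y'] as (linear) vector fields on π*E. -/

import Mathlib

/- STATEMENT 15: the fibre derivative commutes with the Lie bracket,
`[FY, FY'] = F[Y, Y']`, for projectable vector fields `Y, Y'` on a vector bundle.
Local model: `E = M × V`, `π^*E ≅ M × V × V`; vector fields are maps to the model
space and the Lie bracket is `[X,Y](p) = DY(p) X(p) - DX(p) Y(p)`. -/

section FD
variable {M V : Type*} [NormedAddCommGroup M] [NormedSpace ℝ M]
  [NormedAddCommGroup V] [NormedSpace ℝ V]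

/-- Lie bracket of vector fields on a normed space. -/
noncomputable def lieBkt {E : Type*} [NormedAddCommGroup E] [NormedSpace ℝ E]
    (X Y : E → E) : E → E :=
  fun p => fderiv ℝ Y p (X p) - fderiv ℝ X p (Y p)

/-- The fibre derivative `FY` of a vector field `Y` on `E = M × V`, as a vector field
on `π^*E ≅ M × V × V`. -/
noncomputable def fibreDerivVF (Y : M × V → M × V) : M × V × V → M × V × V :=
  fun p => ((Y (p.1, p.2.1)).1, (Y (p.1, p.2.1)).2,
    deriv (fun s : ℝ => (Y (p.1, p.2.1 + s • p.2.2)).2) 0)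

noncomputable def phiL : (M × V × V) →L[ℝ] (M × V) :=
  (ContinuousLinearMap.fst ℝ M (V × V)).prod
    ((ContinuousLinearMap.fst ℝ V V).comp (ContinuousLinearMap.snd ℝ M (V × V)))

noncomputable def iotaL : (M × V × V) →L[ℝ] (M × V) :=
  (0 : (M × V × V) →L[ℝ] M).prod
    ((ContinuousLinearMap.snd ℝ V V).comp (ContinuousLinearMap.snd ℝ M (V × V)))

@[simp] lemma phiL_apply (q : M × V × V) : phiL q = (q.1, q.2.1) := rfl
@[simp] lemma iotaL_apply (q : M × V × V) : iotaL q = ((0 : M), q.2.2) := rfl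

lemma hasDerivAt_line (x : M) (v w : V) :
    HasDerivAt (fun s : ℝ => (x, v + s • w)) ((0 : M), w) 0 := by
  have h1 : HasDerivAt (fun s : ℝ => v + s • w) w 0 := by
    simpa using ((hasDerivAt_id (0:ℝ)).smul_const w).const_add v
  exact (hasDerivAt_const (0:ℝ) x).prodMk h1

lemma deriv_fibre (Z : M × V → M × V) (hZ : ContDiff ℝ (⊤ : ℕ∞) Z) (x : M) (v w : V) :
    deriv (fun s : ℝ => (Z (x, v + s • w)).2) 0
      = fderiv ℝ (fun p : M × V => (Z p).2) (x, v) ((0 : M), w) := by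
  have hb : ContDiff ℝ (⊤ : ℕ∞) (fun p : M × V => (Z p).2) := hZ.snd
  have hb' : HasFDerivAt (fun p : M × V => (Z p).2)
      (fderiv ℝ (fun p : M × V => (Z p).2) (x, v)) (x, v) :=
    (hb.differentiable (by simp) (x, v)).hasFDerivAt
  have hb2 : HasFDerivAt (fun p : M × V => (Z p).2)
      (fderiv ℝ (fun p : M × V => (Z p).2) (x, v)) (x, v + (0:ℝ) • w) := by simpa using hb'
  exact (hb2.comp_hasDerivAt (0:ℝ) (hasDerivAt_line x v w)).deriv

lemma fibreDerivVF_eq (Z : M × V → M × V) (hZ : ContDiff ℝ (⊤ : ℕ∞) Z) :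
    fibreDerivVF Z = fun q : M × V × V =>
      ((Z (q.1, q.2.1)).1, (Z (q.1, q.2.1)).2,
        fderiv ℝ (fun p : M × V => (Z p).2) (q.1, q.2.1) ((0 : M), q.2.2)) := by
  funext q
  simp only [fibreDerivVF, deriv_fibre Z hZ q.1 q.2.1 q.2.2]

lemma hasFDerivAt_FD (Z : M × V → M × V) (hZ : ContDiff ℝ (⊤ : ℕ∞) Z) (q : M × V × V) :
    HasFDerivAt (fibreDerivVF Z)
      (((fderiv ℝ (fun p : M × V => (Z p).1) (q.1, q.2.1)).comp phiL).prod
        (((fderiv ℝ (fun p : M × V => (Z p).2) (q.1, q.2.1)).comp phiL).prod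
          (((fderiv ℝ (fun p : M × V => (Z p).2) (q.1, q.2.1)).comp iotaL) +
            ((fderiv ℝ (fderiv ℝ (fun p : M × V => (Z p).2)) (q.1, q.2.1)).comp phiL).flip
              ((0 : M), q.2.2)))) q := by
  rw [fibreDerivVF_eq Z hZ]
  set b : M × V → V := fun p => (Z p).2 with hbdef
  set p : M × V := (q.1, q.2.1) with hpdef
  have hphi : HasFDerivAt (fun q : M × V × V => ((q.1, q.2.1) : M × V)) phiL q :=
    by exact (phiL (M:=M) (V:=V)).hasFDerivAt
  have hiota : HasFDerivAt (fun q : M × V × V => (((0:M), q.2.2) : M × V)) iotaL q :=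
    by exact (iotaL (M:=M) (V:=V)).hasFDerivAt
  have ha : HasFDerivAt (fun q : M × V × V => (Z (q.1, q.2.1)).1)
      ((fderiv ℝ (fun p : M × V => (Z p).1) p).comp phiL) q :=
    ((hZ.fst.differentiable (by simp) p).hasFDerivAt).comp (g := fun p : M × V => (Z p).1) (f := fun q : M × V × V => ((q.1, q.2.1) : M × V)) q hphi
  have hb : HasFDerivAt (fun q : M × V × V => (Z (q.1, q.2.1)).2)
      ((fderiv ℝ b p).comp phiL) q :=
    ((hZ.snd.differentiable (by simp) p).hasFDerivAt).comp (g := b) (f := fun q : M × V × V => ((q.1, q.2.1) : M × V)) q hphi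
  have hF : ContDiff ℝ (⊤ : ℕ∞) (fderiv ℝ b) :=
    hZ.snd.fderiv_right (mod_cast le_top)
  have hc : HasFDerivAt (fun q : M × V × V => fderiv ℝ b (q.1, q.2.1))
      ((fderiv ℝ (fderiv ℝ b) p).comp phiL) q :=
    ((hF.differentiable (by simp) p).hasFDerivAt).comp q hphi
  have h3 := hc.clm_apply hiota
  exact ha.prodMk (hb.prodMk h3)

lemma proj_fderiv (Z : M × V → M × V) (hZ : ContDiff ℝ (⊤ : ℕ∞) Z) (X : M → M)
    (hproj : ∀ p : M × V, (Z p).1 = X p.1) (x : M) (v u : V) :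
    fderiv ℝ (fun p : M × V => (Z p).1) (x, v) ((0 : M), u) = 0 := by
  have ha : HasFDerivAt (fun p : M × V => (Z p).1)
      (fderiv ℝ (fun p : M × V => (Z p).1) (x, v)) (x, v + (0:ℝ) • u) := by
    simpa using (hZ.fst.differentiable (by simp) (x, v)).hasFDerivAt
  have h1 : HasDerivAt (fun s : ℝ => (Z (x, v + s • u)).1)
      (fderiv ℝ (fun p : M × V => (Z p).1) (x, v) ((0 : M), u)) 0 :=
    ha.comp_hasDerivAt (l := fun p : M × V => (Z p).1) (f := fun s : ℝ => (x, v + s • u)) (0:ℝ) (hasDerivAt_line x v u)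
  have h2 : (fun s : ℝ => (Z (x, v + s • u)).1) = fun _ => X x := by
    funext s; exact hproj _
  rw [h2] at h1
  exact h1.unique (hasDerivAt_const 0 (X x))

lemma fderiv_prod_eq (Z : M × V → M × V) (hZ : ContDiff ℝ (⊤ : ℕ∞) Z) (p : M × V) :
    fderiv ℝ Z p = (fderiv ℝ (fun p : M × V => (Z p).1) p).prod
      (fderiv ℝ (fun p : M × V => (Z p).2) p) := by
  have h1 : HasFDerivAt (fun p : M × V => (Z p).1)
      (fderiv ℝ (fun p : M × V => (Z p).1) p) p :=
    (hZ.fst.differentiable (by simp) p).hasFDerivAt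
  have h2 : HasFDerivAt (fun p : M × V => (Z p).2)
      (fderiv ℝ (fun p : M × V => (Z p).2) p) p :=
    (hZ.snd.differentiable (by simp) p).hasFDerivAt
  exact (h1.prodMk h2).fderiv

/-- `[FY, FY'] = F[Y, Y']` for smooth projectable vector fields. -/
theorem fibreDeriv_commutes_with_bracket
    (Y Y' : M × V → M × V)
    (hY : ContDiff ℝ (⊤ : ℕ∞) Y) (hY' : ContDiff ℝ (⊤ : ℕ∞) Y')
    (X X' : M → M)
    (hproj : ∀ p : M × V, (Y p).1 = X p.1)
    (hproj' : ∀ p : M × V, (Y' p).1 = X' p.1) :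
    lieBkt (fibreDerivVF Y) (fibreDerivVF Y') = fibreDerivVF (lieBkt Y Y') := by
  have hZ : ContDiff ℝ (⊤ : ℕ∞) (lieBkt Y Y') :=
    ((hY'.fderiv_right (mod_cast le_top)).clm_apply hY).sub
      ((hY.fderiv_right (mod_cast le_top)).clm_apply hY')
  funext q
  obtain ⟨x, v, w⟩ := q
  show fderiv ℝ (fibreDerivVF Y') (x, v, w) (fibreDerivVF Y (x, v, w))
      - fderiv ℝ (fibreDerivVF Y) (x, v, w) (fibreDerivVF Y' (x, v, w))
      = fibreDerivVF (lieBkt Y Y') (x, v, w)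
  rw [(hasFDerivAt_FD Y' hY' (x, v, w)).fderiv, (hasFDerivAt_FD Y hY (x, v, w)).fderiv,
    fibreDerivVF_eq Y hY, fibreDerivVF_eq Y' hY', fibreDerivVF_eq _ hZ]
  simp only [ContinuousLinearMap.prod_apply, ContinuousLinearMap.comp_apply,
    ContinuousLinearMap.add_apply, ContinuousLinearMap.flip_apply,
    phiL_apply, iotaL_apply, Prod.mk.eta, Prod.fst_sub, Prod.snd_sub, Prod.mk_sub_mk]
  set b : M × V → V := fun p : M × V => (Y p).2 with hb
  set b' : M × V → V := fun p : M × V => (Y' p).2 with hb'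
  have hdiffb : Differentiable ℝ b := hY.snd.differentiable (by simp)
  have hdiffb' : Differentiable ℝ b' := hY'.snd.differentiable (by simp)
  have hFcd : ContDiff ℝ (⊤ : ℕ∞) (fderiv ℝ b) := hY.snd.fderiv_right (mod_cast le_top)
  have hF'cd : ContDiff ℝ (⊤ : ℕ∞) (fderiv ℝ b') := hY'.snd.fderiv_right (mod_cast le_top)
  have hFd : HasFDerivAt (fderiv ℝ b) (fderiv ℝ (fderiv ℝ b) (x, v)) (x, v) :=
    ((hFcd.differentiable (by simp)) (x, v)).hasFDerivAt
  have hF'd : HasFDerivAt (fderiv ℝ b') (fderiv ℝ (fderiv ℝ b') (x, v)) (x, v) :=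
    ((hF'cd.differentiable (by simp)) (x, v)).hasFDerivAt
  have hYd : HasFDerivAt Y (fderiv ℝ Y (x, v)) (x, v) :=
    (hY.differentiable (by simp) (x, v)).hasFDerivAt
  have hY'd : HasFDerivAt Y' (fderiv ℝ Y' (x, v)) (x, v) :=
    (hY'.differentiable (by simp) (x, v)).hasFDerivAt
  -- rewrite the second component of the bracket
  have hbZ : (fun r : M × V => (lieBkt Y Y' r).2)
      = fun r : M × V => fderiv ℝ b' r (Y r) - fderiv ℝ b r (Y' r) := by
    funext r
    simp only [lieBkt, Prod.snd_sub, fderiv_prod_eq Y hY, fderiv_prod_eq Y' hY',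
      ContinuousLinearMap.prod_apply, hb, hb']
  -- derivative of the second component of the bracket
  have hder : HasFDerivAt (fun r : M × V => fderiv ℝ b' r (Y r) - fderiv ℝ b r (Y' r))
      (((fderiv ℝ b' (x, v)).comp (fderiv ℝ Y (x, v))
          + (fderiv ℝ (fderiv ℝ b') (x, v)).flip (Y (x, v)))
        - ((fderiv ℝ b (x, v)).comp (fderiv ℝ Y' (x, v))
          + (fderiv ℝ (fderiv ℝ b) (x, v)).flip (Y' (x, v)))) (x, v) :=
    (hF'd.clm_apply hYd).sub (hFd.clm_apply hY'd)
  have hfd3 : fderiv ℝ (fun r : M × V => (lieBkt Y Y' r).2) (x, v) ((0 : M), w)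
      = fderiv ℝ b' (x, v) (fderiv ℝ Y (x, v) ((0 : M), w))
        + fderiv ℝ (fderiv ℝ b') (x, v) ((0 : M), w) (Y (x, v))
        - (fderiv ℝ b (x, v) (fderiv ℝ Y' (x, v) ((0 : M), w))
          + fderiv ℝ (fderiv ℝ b) (x, v) ((0 : M), w) (Y' (x, v))) := by
    rw [hbZ, hder.fderiv]
    simp [ContinuousLinearMap.sub_apply, ContinuousLinearMap.add_apply,
      ContinuousLinearMap.comp_apply, ContinuousLinearMap.flip_apply]
  -- projectability: the M-component of fderiv Y (x,v) (0,w) vanishes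
  have hprM : fderiv ℝ Y (x, v) ((0 : M), w) = ((0 : M), fderiv ℝ b (x, v) ((0 : M), w)) := by
    rw [fderiv_prod_eq Y hY]
    simp only [ContinuousLinearMap.prod_apply, hb]
    rw [proj_fderiv Y hY X hproj x v w]
  have hprM' : fderiv ℝ Y' (x, v) ((0 : M), w) = ((0 : M), fderiv ℝ b' (x, v) ((0 : M), w)) := by
    rw [fderiv_prod_eq Y' hY']
    simp only [ContinuousLinearMap.prod_apply, hb']
    rw [proj_fderiv Y' hY' X' hproj' x v w]
  -- symmetry of second derivatives
  have hsymm : fderiv ℝ (fderiv ℝ b) (x, v) ((0 : M), w) (Y' (x, v))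
      = fderiv ℝ (fderiv ℝ b) (x, v) (Y' (x, v)) ((0 : M), w) :=
    second_derivative_symmetric (fun y => (hdiffb y).hasFDerivAt) hFd _ _
  have hsymm' : fderiv ℝ (fderiv ℝ b') (x, v) ((0 : M), w) (Y (x, v))
      = fderiv ℝ (fderiv ℝ b') (x, v) (Y (x, v)) ((0 : M), w) :=
    second_derivative_symmetric (fun y => (hdiffb' y).hasFDerivAt) hF'd _ _
  refine Prod.ext ?_ (Prod.ext ?_ ?_)
  · simp only [lieBkt, Prod.fst_sub, fderiv_prod_eq Y hY, fderiv_prod_eq Y' hY',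
      ContinuousLinearMap.prod_apply]
  · simp only [lieBkt, Prod.snd_sub, fderiv_prod_eq Y hY, fderiv_prod_eq Y' hY',
      ContinuousLinearMap.prod_apply, hb, hb']
  · show _ = fderiv ℝ (fun r : M × V => (lieBkt Y Y' r).2) (x, v) ((0 : M), w)
    rw [hfd3, hprM, hprM', hsymm, hsymm']

end FD
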